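/- In the saddle-point setting with inexact preconditioning, where M_U = [[F, Bᵀ],[0, H2]], M̃_U = [[P₁, Bᵀ],[0, H2]], P₁ ∈ ℝ^{n×n} is nonsingular, ‖P₁⁻¹F − I‖_{H1} ≤ C₃η, and H = blockdiag(H1, H2), one has ‖M̃_U⁻¹K‖_H ≤ (1 + C₃η) ‖M_U⁻¹K‖_H. -/

import Mathlib

open Matrix

/-- The `H`-norm of a vector: `‖u‖_H = (uᵀ H u)^{1/2}`. -/
noncomputable def vnorm {α : Type*} [Fintype α] (H : Matrix α α ℝ) (u : α → ℝ) : ℝ :=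
  Real.sqrt (u ⬝ᵥ (H *ᵥ u))

/-- The weighted operator norm `‖M‖_{H1,H2} = sup_{v ≠ 0} ‖M v‖_{H2} / ‖v‖_{H1}`.
For a square matrix, `‖M‖_H = wnorm H H M`; the spectral norm is `wnorm 1 1 M`. -/
noncomputable def wnorm {α β : Type*} [Fintype α] [Fintype β]
    (H1 : Matrix α α ℝ) (H2 : Matrix β β ℝ) (M : Matrix β α ℝ) : ℝ :=
  sSup {r : ℝ | ∃ v : α → ℝ, v ≠ 0 ∧ r = vnorm H2 (M *ᵥ v) / vnorm H1 v}
set_option linter.unusedSectionVars false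

namespace Aux
variable {α β : Type*} [Fintype α] [Fintype β] [DecidableEq α] [DecidableEq β]
open scoped MatrixOrder

lemma sqrt_mul_self' {H : Matrix α α ℝ} (hH : H.PosSemidef) : CFC.sqrt H * CFC.sqrt H = H := by
  rw [← pow_two]
  exact CFC.sq_sqrt H hH.nonneg

lemma dot_self_eq (w : α → ℝ) :
    Real.sqrt (w ⬝ᵥ w) = ‖(WithLp.equiv 2 (α → ℝ)).symm w‖ := by
  rw [EuclideanSpace.norm_eq]
  congr 1
  refine Finset.sum_congr rfl fun i _ => ?_
  simp only [WithLp.equiv_symm_apply, WithLp.ofLp_toLp]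
  rw [Real.norm_eq_abs, sq_abs, sq]

lemma vnorm_eq {H : Matrix α α ℝ} (hH : H.PosSemidef) (u : α → ℝ) :
    vnorm H u = ‖(WithLp.equiv 2 (α → ℝ)).symm (CFC.sqrt H *ᵥ u)‖ := by
  rw [← dot_self_eq]
  unfold vnorm
  congr 1
  have hsym : (CFC.sqrt H)ᵀ = CFC.sqrt H := by
    have h := (CFC.sqrt_nonneg H).posSemidef.isHermitian
    simpa [Matrix.IsHermitian] using h
  conv_lhs => rw [← sqrt_mul_self' hH, ← mulVec_mulVec, dotProduct_mulVec]
  rw [show u ᵥ* CFC.sqrt H = CFC.sqrt H *ᵥ u from by conv_lhs => rw [← hsym, vecMul_transpose]]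

lemma vnorm_pos {H : Matrix α α ℝ} (hH : H.PosDef) {u : α → ℝ} (hu : u ≠ 0) :
    0 < vnorm H u :=
  Real.sqrt_pos.mpr (by simpa using hH.dotProduct_mulVec_pos hu)

lemma vnorm_add_le {H : Matrix α α ℝ} (hH : H.PosSemidef) (a b : α → ℝ) :
    vnorm H (a + b) ≤ vnorm H a + vnorm H b := by
  rw [vnorm_eq hH, vnorm_eq hH, vnorm_eq hH, mulVec_add]
  simp only [WithLp.equiv_symm_apply, WithLp.toLp_add]
  exact norm_add_le _ _

lemma exists_bound {H1 : Matrix α α ℝ} {H2 : Matrix β β ℝ} (h1 : H1.PosDef) (h2 : H2.PosDef)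
    (M : Matrix β α ℝ) : ∃ C : ℝ, 0 ≤ C ∧ ∀ v, vnorm H2 (M *ᵥ v) ≤ C * vnorm H1 v := by
  set S1 := CFC.sqrt H1 with hS1
  set S2 := CFC.sqrt H2 with hS2
  have hdet : IsUnit S1.det := by
    have hmul : S1.det * S1.det = H1.det := by
      rw [← det_mul, sqrt_mul_self' h1.posSemidef]
    refine isUnit_iff_ne_zero.mpr fun h => ?_
    rw [h, mul_zero] at hmul
    exact h1.det_pos.ne' hmul.symm
  set A := S2 * M * S1⁻¹ with hA
  set T := LinearMap.toContinuousLinearMap (Matrix.toEuclideanLin A) with hT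
  refine ⟨‖T‖, norm_nonneg _, fun v => ?_⟩
  rw [vnorm_eq h2.posSemidef, vnorm_eq h1.posSemidef]
  have key : S2 *ᵥ (M *ᵥ v) = A *ᵥ (S1 *ᵥ v) := by
    rw [mulVec_mulVec, mulVec_mulVec, hA, Matrix.mul_assoc (S2 * M),
      Matrix.nonsing_inv_mul _ hdet, Matrix.mul_one]
  rw [key]
  have h := T.le_opNorm ((WithLp.equiv 2 (α → ℝ)).symm (S1 *ᵥ v))
  simpa [hT] using h

lemma wnorm_nonneg (H1 : Matrix α α ℝ) (H2 : Matrix β β ℝ) (M : Matrix β α ℝ) :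
    0 ≤ wnorm H1 H2 M := by
  apply Real.sSup_nonneg
  rintro r ⟨v, hv, rfl⟩
  exact div_nonneg (Real.sqrt_nonneg _) (Real.sqrt_nonneg _)

lemma bddAbove_set {H1 : Matrix α α ℝ} {H2 : Matrix β β ℝ} (h1 : H1.PosDef) (h2 : H2.PosDef)
    (M : Matrix β α ℝ) :
    BddAbove {r : ℝ | ∃ v : α → ℝ, v ≠ 0 ∧ r = vnorm H2 (M *ᵥ v) / vnorm H1 v} := by
  obtain ⟨C, hC0, hC⟩ := exists_bound h1 h2 M
  refine ⟨C, ?_⟩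
  rintro r ⟨v, hv, rfl⟩
  rw [div_le_iff₀ (vnorm_pos h1 hv)]
  exact hC v

lemma vnorm_mulVec_le {H1 : Matrix α α ℝ} {H2 : Matrix β β ℝ} (h1 : H1.PosDef) (h2 : H2.PosDef)
    (M : Matrix β α ℝ) (v : α → ℝ) :
    vnorm H2 (M *ᵥ v) ≤ wnorm H1 H2 M * vnorm H1 v := by
  by_cases hv : v = 0
  · subst hv
    simp [vnorm]
  · have hmem : vnorm H2 (M *ᵥ v) / vnorm H1 v ∈
        {r : ℝ | ∃ v : α → ℝ, v ≠ 0 ∧ r = vnorm H2 (M *ᵥ v) / vnorm H1 v} := ⟨v, hv, rfl⟩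
    have h := le_csSup (bddAbove_set h1 h2 M) hmem
    rw [div_le_iff₀ (vnorm_pos h1 hv)] at h
    exact h

lemma dot_fromBlocks (A : Matrix α α ℝ) (D : Matrix β β ℝ) (x : α → ℝ) (y : β → ℝ) :
    (Sum.elim x y ⬝ᵥ ((fromBlocks A 0 0 D) *ᵥ Sum.elim x y)) = x ⬝ᵥ A *ᵥ x + y ⬝ᵥ D *ᵥ y := by
  rw [fromBlocks_mulVec, sumElim_dotProduct_sumElim]
  simp

lemma posDef_fromBlocks {H1 : Matrix α α ℝ} {H2 : Matrix β β ℝ} (h1 : H1.PosDef)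
    (h2 : H2.PosDef) : (fromBlocks H1 0 0 H2).PosDef := by
  refine Matrix.PosDef.of_dotProduct_mulVec_pos ?_ ?_
  · show _ = _
    rw [fromBlocks_conjTranspose, h1.1, h2.1]
    simp
  · intro v hv
    rw [← Sum.elim_comp_inl_inr v] at hv ⊢
    simp only [star_trivial]
    rw [dot_fromBlocks]
    by_cases hx : v ∘ Sum.inl = 0
    · have hy : v ∘ Sum.inr ≠ 0 := by
        intro hy
        apply hv
        rw [hx, hy]
        ext (i | j) <;> rfl
      have p2 := h2.dotProduct_mulVec_pos hy
      have p1 := h1.posSemidef.dotProduct_mulVec_nonneg (v ∘ Sum.inl)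
      simp only [star_trivial] at p1 p2
      linarith
    · have p1 := h1.dotProduct_mulVec_pos hx
      have p2 := h2.posSemidef.dotProduct_mulVec_nonneg (v ∘ Sum.inr)
      simp only [star_trivial] at p1 p2
      linarith

lemma vnorm_blockdiag_le {H1 : Matrix α α ℝ} {H2 : Matrix β β ℝ} (h1 : H1.PosSemidef)
    (h2 : H2.PosSemidef) {A : Matrix α α ℝ} {c : ℝ} (hc : 1 ≤ c)
    (hA : ∀ x, vnorm H1 (A *ᵥ x) ≤ c * vnorm H1 x) (v : α ⊕ β → ℝ) :
    vnorm (fromBlocks H1 0 0 H2) ((fromBlocks A 0 0 (1 : Matrix β β ℝ)) *ᵥ v) ≤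
      c * vnorm (fromBlocks H1 0 0 H2) v := by
  have hc0 : 0 ≤ c := le_trans zero_le_one hc
  obtain ⟨x, y, rfl⟩ : ∃ x y, v = Sum.elim x y := ⟨_, _, (Sum.elim_comp_inl_inr v).symm⟩
  rw [fromBlocks_mulVec]
  simp only [zero_mulVec, add_zero, zero_add, one_mulVec, Sum.elim_comp_inl, Sum.elim_comp_inr]
  unfold vnorm
  rw [dot_fromBlocks, dot_fromBlocks]
  have e1 : x ⬝ᵥ H1 *ᵥ x = (vnorm H1 x) ^ 2 := (Real.sq_sqrt (by simpa using h1.dotProduct_mulVec_nonneg x)).symm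
  have e2 : y ⬝ᵥ H2 *ᵥ y = (vnorm H2 y) ^ 2 := (Real.sq_sqrt (by simpa using h2.dotProduct_mulVec_nonneg y)).symm
  have e3 : (A *ᵥ x) ⬝ᵥ H1 *ᵥ (A *ᵥ x) = (vnorm H1 (A *ᵥ x)) ^ 2 :=
    (Real.sq_sqrt (by simpa using h1.dotProduct_mulVec_nonneg (A *ᵥ x))).symm
  rw [e1, e2, e3]
  have hb : (vnorm H1 (A *ᵥ x)) ^ 2 + (vnorm H2 y) ^ 2 ≤
      c ^ 2 * ((vnorm H1 x) ^ 2 + (vnorm H2 y) ^ 2) := by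
    have hax : (vnorm H1 (A *ᵥ x)) ^ 2 ≤ (c * vnorm H1 x) ^ 2 := by
      apply pow_le_pow_left₀ (Real.sqrt_nonneg _) (hA x)
    have hyy : (vnorm H2 y) ^ 2 ≤ c ^ 2 * (vnorm H2 y) ^ 2 := by
      have hc2 : 1 ≤ c ^ 2 := by nlinarith
      nlinarith [mul_le_mul_of_nonneg_left hc2 (sq_nonneg (vnorm H2 y))]
    nlinarith
  calc Real.sqrt ((vnorm H1 (A *ᵥ x)) ^ 2 + (vnorm H2 y) ^ 2) ≤
      Real.sqrt (c ^ 2 * ((vnorm H1 x) ^ 2 + (vnorm H2 y) ^ 2)) := Real.sqrt_le_sqrt hb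
    _ = c * Real.sqrt ((vnorm H1 x) ^ 2 + (vnorm H2 y) ^ 2) := by
        rw [Real.sqrt_mul (sq_nonneg c), Real.sqrt_sq hc0]

end Aux

theorem stmt_15
    {n m : ℕ} (F : Matrix (Fin n) (Fin n) ℝ) (B : Matrix (Fin m) (Fin n) ℝ)
    (H1 N : Matrix (Fin n) (Fin n) ℝ) (H2 : Matrix (Fin m) (Fin m) ℝ)
    (hH1 : H1 = ((1 : ℝ)/2) • (F + Fᵀ)) (hN : N = ((1 : ℝ)/2) • (F - Fᵀ))
    (hH1pd : H1.PosDef) (hH2pd : H2.PosDef)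
    (hBrank : B.rank = m)
    (η C₃ : ℝ) (hη : 0 < η) (hC3 : 0 < C₃)
    (P₁ : Matrix (Fin n) (Fin n) ℝ) (hP₁ : IsUnit P₁.det)
    (hP1F : wnorm H1 H1 (P₁⁻¹ * F - 1) ≤ C₃ * η)
    (K MU MUt H : Matrix (Fin n ⊕ Fin m) (Fin n ⊕ Fin m) ℝ)
    (hK : K = fromBlocks F Bᵀ B 0)
    (hMU : MU = fromBlocks F Bᵀ 0 H2)
    (hMUt : MUt = fromBlocks P₁ Bᵀ 0 H2)
    (hH : H = fromBlocks H1 0 0 H2) :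
    wnorm H H (MUt⁻¹ * K) ≤ (1 + C₃ * η) * wnorm H H (MU⁻¹ * K) := by
  have hHpd : H.PosDef := hH ▸ Aux.posDef_fromBlocks hH1pd hH2pd
  -- quadratic form of F equals that of H1
  have hFquad : ∀ x : Fin n → ℝ, x ⬝ᵥ F *ᵥ x = x ⬝ᵥ H1 *ᵥ x := by
    intro x
    have hsymq : x ⬝ᵥ Fᵀ *ᵥ x = x ⬝ᵥ F *ᵥ x := by
      rw [mulVec_transpose, dotProduct_comm, ← dotProduct_mulVec]
    rw [hH1, smul_mulVec, dotProduct_smul, add_mulVec, dotProduct_add, hsymq]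
    simp only [smul_eq_mul]
    ring
  have hFdet : IsUnit F.det := by
    rw [isUnit_iff_ne_zero]
    intro h
    obtain ⟨v, hv, hFv⟩ := (Matrix.exists_mulVec_eq_zero_iff).mpr h
    have hpos := hH1pd.dotProduct_mulVec_pos hv
    simp only [star_trivial] at hpos
    rw [← hFquad, hFv, dotProduct_zero] at hpos
    exact lt_irrefl _ hpos
  have hH2det : IsUnit H2.det := isUnit_iff_ne_zero.mpr hH2pd.det_pos.ne'
  have hMUdet : IsUnit MU.det := by
    rw [hMU, det_fromBlocks_zero₂₁]
    exact hFdet.mul hH2det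
  have hMUtdet : IsUnit MUt.det := by
    rw [hMUt, det_fromBlocks_zero₂₁]
    exact hP₁.mul hH2det
  set A := P₁⁻¹ * F with hAdef
  set D : Matrix (Fin n ⊕ Fin m) (Fin n ⊕ Fin m) ℝ := fromBlocks A 0 0 1 with hD
  have hMUD : MUt * D = MU := by
    rw [hMUt, hMU, hD, fromBlocks_multiply]
    rw [hAdef, Matrix.mul_nonsing_inv_cancel_left _ _ hP₁]
    simp
  have hDK : MUt⁻¹ * K = D * (MU⁻¹ * K) := by
    have hDeq : D = MUt⁻¹ * MU := by
      rw [← hMUD, Matrix.nonsing_inv_mul_cancel_left _ _ hMUtdet]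
    rw [hDeq, Matrix.mul_assoc, Matrix.mul_nonsing_inv_cancel_left _ _ hMUdet]
  set c := 1 + C₃ * η with hc
  have hc1 : (1 : ℝ) ≤ c := by nlinarith
  have hc0 : (0 : ℝ) ≤ c := by linarith
  -- bound for A
  have hAx : ∀ x : Fin n → ℝ, vnorm H1 (A *ᵥ x) ≤ c * vnorm H1 x := by
    intro x
    have hsplit : A *ᵥ x = (A - 1) *ᵥ x + x := by
      rw [sub_mulVec, one_mulVec, sub_add_cancel]
    rw [hsplit]
    calc vnorm H1 ((A - 1) *ᵥ x + x) ≤ vnorm H1 ((A - 1) *ᵥ x) + vnorm H1 x :=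
          Aux.vnorm_add_le hH1pd.posSemidef _ _
      _ ≤ wnorm H1 H1 (A - 1) * vnorm H1 x + vnorm H1 x :=
          add_le_add_left (Aux.vnorm_mulVec_le hH1pd hH1pd _ _) _
      _ ≤ C₃ * η * vnorm H1 x + vnorm H1 x := by
          have := mul_le_mul_of_nonneg_right hP1F (Real.sqrt_nonneg (x ⬝ᵥ H1 *ᵥ x))
          exact add_le_add_left this _
      _ = c * vnorm H1 x := by rw [hc]; ring
  have key : ∀ v : Fin n ⊕ Fin m → ℝ,
      vnorm H ((MUt⁻¹ * K) *ᵥ v) ≤ c * vnorm H ((MU⁻¹ * K) *ᵥ v) := by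
    intro v
    rw [hDK, ← mulVec_mulVec, hH, hD]
    exact Aux.vnorm_blockdiag_le hH1pd.posSemidef hH2pd.posSemidef hc1 hAx _
  apply Real.sSup_le
  · rintro r ⟨v, hv, rfl⟩
    have hvpos := Aux.vnorm_pos hHpd hv
    have step1 : vnorm H ((MUt⁻¹ * K) *ᵥ v) / vnorm H v ≤
        c * (vnorm H ((MU⁻¹ * K) *ᵥ v) / vnorm H v) := by
      rw [← mul_div_assoc]
      gcongr
      exact key v
    have step2 : vnorm H ((MU⁻¹ * K) *ᵥ v) / vnorm H v ≤ wnorm H H (MU⁻¹ * K) := by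
      rw [div_le_iff₀ hvpos]
      exact Aux.vnorm_mulVec_le hHpd hHpd _ _
    calc vnorm H ((MUt⁻¹ * K) *ᵥ v) / vnorm H v
        ≤ c * (vnorm H ((MU⁻¹ * K) *ᵥ v) / vnorm H v) := step1
      _ ≤ c * wnorm H H (MU⁻¹ * K) := mul_le_mul_of_nonneg_left step2 hc0
  · exact mul_nonneg hc0 (Aux.wnorm_nonneg _ _ _)
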